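/- With P_m as defined and d(m,k) the coefficients of P_m in the basis B_k (so that P_m(x) = Σ_k d(m,k)·B_k(x)), one has the closed form d(m,k) = Σ_{i=0}^{m} Σ_{j=k}^{m} 3·(-1)^{k+j} · C(2k,k) · C(j,i) · C(m,i) · C(i, m-j) / (2(2i-1)(2j+1)(2m-2i-1)) for m ≥ 0. -/

import Mathlib

/-- Binomial coefficient polynomial `x(x-1)...(x-j+1)/j!` at integer `x`; zero for `j < 0`. -/
def binC (x j : ℤ) : ℚ :=
  if j < 0 then 0 else (∏ t ∈ Finset.range j.toNat, ((x : ℚ) - t)) / (j.toNat).factorial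

/-- The coefficients `d(m,k)`; zero for `m < 0`. -/
noncomputable def dd (m k : ℤ) : ℚ :=
  if m < 0 then 0 else
  ∑ i ∈ Finset.Icc 0 m, ∑ j ∈ Finset.Icc k m,
    3 * (-1 : ℚ) ^ (k + j) * binC (2 * k) k * binC j i * binC m i * binC i (m - j) /
      (2 * (2 * i - 1) * (2 * j + 1) * (2 * m - 2 * i - 1))

/-- Binomial coefficient polynomial evaluated at a rational. -/
def binQ (x : ℚ) (j : ℤ) : ℚ :=
  if j < 0 then 0 else (∏ t ∈ Finset.range j.toNat, (x - t)) / (j.toNat).factorial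

noncomputable def PQ (m : ℤ) (x : ℚ) : ℚ :=
  ∑ i ∈ Finset.Icc 0 m, ∑ j ∈ Finset.Icc 0 m,
    binQ (x + j) j * binQ (x - 1) j * binC j i * binC m i * binC i (m - j) *
      3 / ((2 * i - 1) * (2 * j + 1) * (2 * m - 2 * i - 1))

def BQ (k : ℤ) (x : ℚ) : ℚ := binQ (x + k) (2 * k) + binQ (-x + k) (2 * k)

open Finset

lemma binQ_nat (x : ℚ) (j : ℕ) :
    binQ x (j : ℤ) = (∏ t ∈ Finset.range j, (x - t)) / j.factorial := by
  simp [binQ]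

lemma binC_nat (x : ℤ) (j : ℕ) :
    binC x (j : ℤ) = (∏ t ∈ Finset.range j, ((x:ℚ) - t)) / j.factorial := by
  simp [binC]

lemma fact_ne (n : ℕ) : ((n.factorial : ℚ)) ≠ 0 := by exact_mod_cast n.factorial_ne_zero

lemma prod_asc (a b : ℕ) :
    (∏ s ∈ range a, ((b : ℚ) + 1 + s)) * b.factorial = (a + b).factorial := by
  induction a with
  | zero => simp
  | succ n ih =>
    rw [prod_range_succ, mul_right_comm, ih]
    rw [show n + 1 + b = n + b + 1 by ring, Nat.factorial_succ]
    push_cast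
    ring

lemma binC_central (k : ℕ) :
    binC (2 * (k:ℤ)) (k:ℤ) * (k.factorial * k.factorial) = (2*k).factorial := by
  rw [show (2 * (k:ℤ)) = ((2*k : ℕ) : ℤ) by push_cast; ring, binC_nat]
  have h1 : (∏ t ∈ range k, ((((2*k:ℕ):ℤ):ℚ) - t)) = ∏ s ∈ range k, ((k:ℚ) + 1 + s) := by
    rw [← prod_range_reflect]
    apply prod_congr rfl
    intro s hs
    simp only [mem_range] at hs
    have : ((k - 1 - s : ℕ) : ℚ) = (k:ℚ) - 1 - s := by
      push_cast [Nat.cast_sub (by omega : s ≤ k - 1), Nat.cast_sub (by omega : 1 ≤ k)]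
      ring
    rw [this]
    push_cast
    ring
  rw [h1, div_mul_eq_mul_div, ← mul_assoc, prod_asc]
  rw [show k + k = 2 * k by ring]
  exact mul_div_cancel_right₀ _ (by exact_mod_cast k.factorial_ne_zero)

lemma lemA (j : ℕ) (x : ℚ) :
    binQ (x + j) j * binQ (x - 1) j
      = (∏ t ∈ range j, (x^2 - ((t:ℚ)+1)^2)) / ((j.factorial : ℚ))^2 := by
  rw [binQ_nat, binQ_nat]
  have h1 : (∏ t ∈ range j, (x + j - t)) = ∏ s ∈ range j, (x + 1 + s) := by
    rw [← prod_range_reflect]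
    apply prod_congr rfl
    intro s hs
    simp only [mem_range] at hs
    have : ((j - 1 - s : ℕ) : ℚ) = (j:ℚ) - 1 - s := by
      push_cast [Nat.cast_sub (by omega : s ≤ j - 1), Nat.cast_sub (by omega : 1 ≤ j)]
      ring
    rw [this]; ring
  rw [h1, div_mul_div_comm, ← prod_mul_distrib]
  congr 1
  · apply prod_congr rfl
    intro t _
    ring
  · ring

lemma lemG (k : ℕ) (x : ℚ) :
    (∏ t ∈ range (2*k+2), (x + ((k:ℚ)+1) - t))
      = x * (x + k + 1) * ∏ t ∈ range k, (x^2 - ((t:ℚ)+1)^2) := by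
  induction k with
  | zero => simp [prod_range_succ]; ring
  | succ n ih =>
    rw [show 2*(n+1)+2 = ((2*n+2)+1)+1 by ring, prod_range_succ, prod_range_succ']
    have hc : ∀ t ∈ range (2*n+2), x + (((n+1:ℕ):ℚ)+1) - ((t+1:ℕ):ℚ) = x + ((n:ℚ)+1) - t := by
      intro t _; push_cast; ring
    rw [prod_congr rfl hc, ih, prod_range_succ]
    push_cast
    ring

lemma BQ_zero (x : ℚ) : BQ 0 x = 2 := by
  simp [BQ, binQ]; norm_num

lemma binC_zero : binC 0 0 = 1 := by simp [binC]

lemma lemB (k : ℕ) (x : ℚ) :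
    BQ ((k:ℤ)+1) x = 2 * x^2 * (∏ t ∈ range k, (x^2 - ((t:ℚ)+1)^2)) / (2*k+2).factorial := by
  have h2 : 2 * ((k:ℤ)+1) = ((2*k+2 : ℕ) : ℤ) := by push_cast; ring
  rw [BQ, h2, binQ_nat, binQ_nat]
  have e1 : (∏ t ∈ range (2*k+2), (x + ((k:ℤ)+1 : ℤ) - t))
      = ∏ t ∈ range (2*k+2), (x + ((k:ℚ)+1) - t) := by
    apply prod_congr rfl; intro t _; push_cast; ring
  have e2 : (∏ t ∈ range (2*k+2), (-x + ((k:ℤ)+1 : ℤ) - t))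
      = ∏ t ∈ range (2*k+2), (-x + ((k:ℚ)+1) - t) := by
    apply prod_congr rfl; intro t _; push_cast; ring
  rw [e1, e2, lemG, lemG (x := -x), ← add_div]
  simp only [neg_sq]
  congr 1
  ring

lemma lemTerm (k : ℕ) (x : ℚ) :
    binC (2*((k:ℤ)+1)) ((k:ℤ)+1) / 2 * BQ ((k:ℤ)+1) x
      = x^2 * (∏ t ∈ range k, (x^2-((t:ℚ)+1)^2)) / (((k+1).factorial:ℚ))^2 := by
  have hc := binC_central (k+1)
  rw [show ((k+1:ℕ):ℤ) = (k:ℤ)+1 by push_cast; ring,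
      show 2*(k+1) = 2*k+2 from by ring] at hc
  have hb : binC (2*((k:ℤ)+1)) ((k:ℤ)+1)
      = ((2*k+2).factorial : ℚ) / (((k+1).factorial:ℚ))^2 := by
    rw [eq_div_iff (by positivity)]
    rw [pow_two]
    exact_mod_cast hc
  rw [hb, lemB]
  have h1 : (((k+1).factorial:ℚ))^2 ≠ 0 := by positivity
  have h2 : (((2*k+2).factorial:ℚ)) ≠ 0 := fact_ne _
  field_simp

lemma keyP (j : ℕ) (x : ℚ) :
    (∏ t ∈ range j, (x^2 - ((t:ℚ)+1)^2)) / ((j.factorial:ℚ))^2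
      = ∑ k ∈ range (j+1), (-1:ℚ)^(j+k) * binC (2*(k:ℤ)) (k:ℤ) / 2 * BQ (k:ℤ) x := by
  induction j with
  | zero =>
    simp [binC_zero, BQ_zero]
  | succ j ih =>
    rw [sum_range_succ]
    have hsgn : ∀ k ∈ range (j+1),
        (-1:ℚ)^(j+1+k) * binC (2*(k:ℤ)) (k:ℤ) / 2 * BQ (k:ℤ) x
          = -((-1:ℚ)^(j+k) * binC (2*(k:ℤ)) (k:ℤ) / 2 * BQ (k:ℤ) x) := by
      intro k _
      rw [show j+1+k = (j+k)+1 by ring, pow_succ]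
      ring
    rw [sum_congr rfl hsgn, Finset.sum_neg_distrib, ← ih]
    have hev : (-1:ℚ)^(j+1+(j+1)) = 1 := by
      rw [show j+1+(j+1) = 2*(j+1) by ring, pow_mul]
      norm_num
    have hterm : (-1:ℚ)^(j+1+(j+1)) * binC (2*((j+1:ℕ):ℤ)) ((j+1:ℕ):ℤ) / 2 * BQ ((j+1:ℕ):ℤ) x
        = x^2 * (∏ t ∈ range j, (x^2-((t:ℚ)+1)^2)) / (((j+1).factorial:ℚ))^2 := by
      rw [hev, show ((j+1:ℕ):ℤ) = (j:ℤ)+1 by push_cast; ring, one_mul, lemTerm]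
    rw [hterm, prod_range_succ, Nat.factorial_succ]
    have h1 : ((j.factorial:ℚ))^2 ≠ 0 := by positivity
    have h2 : (((j+1)*j.factorial : ℕ):ℚ)^2 ≠ 0 := by positivity
    field_simp
    push_cast
    ring

lemma tri (N : ℕ) (f : ℕ → ℕ → ℚ) :
    ∑ k ∈ range (N+1), ∑ j ∈ Icc k N, f k j
      = ∑ j ∈ range (N+1), ∑ k ∈ range (j+1), f k j := by
  simp only [range_eq_Ico, ← Finset.Ico_add_one_right_eq_Icc]
  exact sum_Ico_Ico_comm 0 (N+1) f

lemma neA (i : ℕ) : (2 * (i:ℚ) - 1) ≠ 0 := by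
  have : ((2*(i:ℤ) - 1 : ℤ) : ℚ) ≠ 0 := Int.cast_ne_zero.mpr (by omega)
  push_cast at this
  convert this using 2

lemma neB (j : ℕ) : (2 * (j:ℚ) + 1) ≠ 0 := by
  have : ((2*(j:ℤ) + 1 : ℤ) : ℚ) ≠ 0 := Int.cast_ne_zero.mpr (by omega)
  push_cast at this
  convert this using 2

lemma neC (n i : ℕ) : (2 * (n:ℚ) - 2 * (i:ℚ) - 1) ≠ 0 := by
  have : ((2*(n:ℤ) - 2*(i:ℤ) - 1 : ℤ) : ℚ) ≠ 0 := Int.cast_ne_zero.mpr (by omega)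
  push_cast at this
  convert this using 2

lemma sum_Icc_cast (a b : ℕ) (f : ℤ → ℚ) :
    ∑ k ∈ Icc (a:ℤ) (b:ℤ), f k = ∑ k ∈ Icc a b, f (k:ℤ) := by
  refine Finset.sum_nbij' (fun k => k.toNat) (fun k => (k:ℤ)) ?_ ?_ ?_ ?_ ?_ <;>
    simp only [mem_Icc] <;> intros k hk
  · omega
  · omega
  · omega
  · omega
  · congr 1; omega

lemma sum_Icc_cast0 (b : ℕ) (f : ℤ → ℚ) :
    ∑ k ∈ Icc (0:ℤ) (b:ℤ), f k = ∑ k ∈ range (b+1), f (k:ℤ) := by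
  rw [show (0:ℤ) = ((0:ℕ):ℤ) from rfl, sum_Icc_cast]
  congr 1
  rw [← Nat.Ico_zero_eq_range, Finset.Ico_add_one_right_eq_Icc]

lemma rowLemma (n i j : ℕ) (x : ℚ) :
    binQ (x + ((j:ℤ):ℚ)) (j:ℤ) * binQ (x - 1) (j:ℤ) * binC (j:ℤ) (i:ℤ) * binC (n:ℤ) (i:ℤ) *
        binC (i:ℤ) ((n:ℤ) - (j:ℤ)) * 3 /
        ((2 * (((i:ℤ)):ℚ) - 1) * (2 * (((j:ℤ)):ℚ) + 1) * (2 * (((n:ℤ)):ℚ) - 2 * (((i:ℤ)):ℚ) - 1))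
      = ∑ k ∈ range (j+1),
          3 * (-1:ℚ) ^ ((k:ℤ) + (j:ℤ)) * binC (2 * (k:ℤ)) (k:ℤ) * binC (j:ℤ) (i:ℤ) *
            binC (n:ℤ) (i:ℤ) * binC (i:ℤ) ((n:ℤ) - (j:ℤ)) /
            (2 * (2 * (((i:ℤ)):ℚ) - 1) * (2 * (((j:ℤ)):ℚ) + 1) *
              (2 * (((n:ℤ)):ℚ) - 2 * (((i:ℤ)):ℚ) - 1)) *
            BQ (k:ℤ) x := by
  simp only [Int.cast_natCast]
  have hK : binQ (x + (j:ℚ)) (j:ℤ) * binQ (x - 1) (j:ℤ)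
      = ∑ k ∈ range (j+1), (-1:ℚ)^(j+k) * binC (2*(k:ℤ)) (k:ℤ) / 2 * BQ (k:ℤ) x := by
    rw [lemA, keyP]
  rw [hK, sum_mul, sum_mul, sum_mul, sum_mul, sum_div]
  refine sum_congr rfl fun k _ => ?_
  have hz : (-1:ℚ) ^ ((k:ℤ) + (j:ℤ)) = (-1:ℚ) ^ (k + j) := by
    rw [show (k:ℤ) + (j:ℤ) = ((k+j:ℕ):ℤ) by push_cast; ring, zpow_natCast]
  rw [hz]
  have h1 := neA i
  have h2 := neB j
  have h3 := neC n i
  field_simp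
  ring

theorem P_eq_sum_d_B (m : ℤ) (hm : 0 ≤ m) (x : ℚ) :
    PQ m x = ∑ k ∈ Finset.Icc 0 m, dd m k * BQ k x := by
  lift m to ℕ using hm with n
  have hL : PQ (n:ℤ) x = ∑ i ∈ range (n+1), ∑ j ∈ range (n+1),
      (binQ (x + ((j:ℤ):ℚ)) (j:ℤ) * binQ (x - 1) (j:ℤ) * binC (j:ℤ) (i:ℤ) * binC (n:ℤ) (i:ℤ) *
        binC (i:ℤ) ((n:ℤ) - (j:ℤ)) * 3 /
        ((2 * (((i:ℤ)):ℚ) - 1) * (2 * (((j:ℤ)):ℚ) + 1) *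
          (2 * (((n:ℤ)):ℚ) - 2 * (((i:ℤ)):ℚ) - 1))) := by
    rw [PQ, sum_Icc_cast0]
    exact sum_congr rfl fun i _ => by rw [sum_Icc_cast0]
  have hR : (∑ k ∈ Finset.Icc (0:ℤ) (n:ℤ), dd (n:ℤ) k * BQ k x)
      = ∑ i ∈ range (n+1), ∑ j ∈ range (n+1), ∑ k ∈ range (j+1),
          (3 * (-1:ℚ) ^ ((k:ℤ) + (j:ℤ)) * binC (2 * (k:ℤ)) (k:ℤ) * binC (j:ℤ) (i:ℤ) *
            binC (n:ℤ) (i:ℤ) * binC (i:ℤ) ((n:ℤ) - (j:ℤ)) /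
            (2 * (2 * (((i:ℤ)):ℚ) - 1) * (2 * (((j:ℤ)):ℚ) + 1) *
              (2 * (((n:ℤ)):ℚ) - 2 * (((i:ℤ)):ℚ) - 1)) *
            BQ (k:ℤ) x) := by
    rw [sum_Icc_cast0]
    have step1 : ∀ k : ℕ, dd (n:ℤ) (k:ℤ) * BQ (k:ℤ) x
        = ∑ i ∈ range (n+1), ∑ j ∈ Icc k n,
            (3 * (-1:ℚ) ^ ((k:ℤ) + (j:ℤ)) * binC (2 * (k:ℤ)) (k:ℤ) * binC (j:ℤ) (i:ℤ) *
              binC (n:ℤ) (i:ℤ) * binC (i:ℤ) ((n:ℤ) - (j:ℤ)) /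
              (2 * (2 * (((i:ℤ)):ℚ) - 1) * (2 * (((j:ℤ)):ℚ) + 1) *
                (2 * (((n:ℤ)):ℚ) - 2 * (((i:ℤ)):ℚ) - 1)) *
              BQ (k:ℤ) x) := by
      intro k
      rw [dd, if_neg (not_lt.mpr (Int.natCast_nonneg n)), sum_Icc_cast0, sum_mul]
      refine sum_congr rfl fun i _ => ?_
      rw [sum_Icc_cast, sum_mul]
    rw [sum_congr rfl fun k _ => step1 k]
    rw [Finset.sum_comm]
    refine sum_congr rfl fun i _ => ?_
    exact tri n _
  rw [hL, hR]
  exact sum_congr rfl fun i _ => sum_congr rfl fun j _ => rowLemma n i j x
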